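/- The Carlitz q-Eulerian polynomial C_n(x,q) = ∑_{π ∈ S_n} x^{des(π)} q^{maj(π)} satisfies C_n(x,q) = ∏_{i=0}^{n}(1-x q^i) · ∑_{j=1}^{∞} [j]_q^n x^{j-1} as formal power series in x and q. -/

import Mathlib

/-- The value `π(k+1)` (1-indexed) of a permutation of `{1, …, n}` realized as a
permutation of `Fin n`, read 0-indexed: `permVal n π k = π(k+1) - 1`. -/
def permVal (n : ℕ) (π : Equiv.Perm (Fin n)) (k : ℕ) : ℕ :=
  if h : k < n then (π ⟨k, h⟩ : ℕ) else k

/-- The descent set `D_π = {j ∈ {1, …, n-1} : π(j) > π(j+1)}`. -/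
def descSet (n : ℕ) (π : Equiv.Perm (Fin n)) : Finset ℕ :=
  (Finset.Icc 1 (n - 1)).filter fun j => permVal n π j < permVal n π (j - 1)

/-- The major index `maj(π) = ∑_{j ∈ D_π} j`. -/
def maj (n : ℕ) (π : Equiv.Perm (Fin n)) : ℕ := ∑ j ∈ descSet n π, j

/-- The number of descents `des(π) = |D_π|`. -/
def des (n : ℕ) (π : Equiv.Perm (Fin n)) : ℕ := (descSet n π).card

/-- The formal power series `∑_{j=1}^∞ [j]_q^n x^{j-1}` in `x = X 0`, `q = X 1`:
the coefficient of `x^{j-1} q^k` is the coefficient of `q^k` in `[j]_q^n`,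
where `[j]_q = 1 + q + ⋯ + q^{j-1}`. -/
noncomputable def carlitzSum (n : ℕ) : MvPowerSeries (Fin 2) ℤ :=
  fun d => ((∑ t ∈ Finset.range (d 0 + 1), (Polynomial.X : Polynomial ℤ) ^ t) ^ n).coeff (d 1)


open Finset Fintype MvPowerSeries

namespace Carlitz


def bddFuns (n a b : ℕ) : Finset (Fin n → ℕ) :=
  (Fintype.piFinset fun _ => Finset.range (a+1)).filter fun f => ∑ i, f i = b

def decSeqs (n a b : ℕ) : Finset (Fin n → ℕ) :=
  (bddFuns n a b).filter fun h => ∀ i j : Fin n, i ≤ j → h j ≤ h i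

lemma mem_bddFuns {n a b : ℕ} {f : Fin n → ℕ} :
    f ∈ bddFuns n a b ↔ (∀ i, f i ≤ a) ∧ ∑ i, f i = b := by
  simp [bddFuns, Fintype.mem_piFinset, Nat.lt_succ_iff]

lemma mem_decSeqs {n a b : ℕ} {h : Fin n → ℕ} :
    h ∈ decSeqs n a b ↔ ((∀ i, h i ≤ a) ∧ ∑ i, h i = b) ∧ ∀ i j : Fin n, i ≤ j → h j ≤ h i := by
  simp [decSeqs, mem_bddFuns]

lemma decSeqs_zero (a b : ℕ) : (decSeqs 0 a b).card = if b = 0 then 1 else 0 := by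
  split_ifs with hb
  · subst hb
    rw [Finset.card_eq_one]
    exact ⟨fun i => 0, by ext f; simp [mem_decSeqs, Subsingleton.elim f fun i => 0]⟩
  · rw [Finset.card_eq_zero]
    ext h
    simp only [mem_decSeqs, Finset.notMem_empty, iff_false]
    rintro ⟨⟨-, hs⟩, -⟩
    exact hb (by simpa using hs.symm)

lemma decSeqs_rec (n a b : ℕ) :
    (decSeqs (n+1) a b).card
      = (decSeqs n a b).card
        + (if n+1 ≤ b ∧ 1 ≤ a then (decSeqs (n+1) (a-1) (b-(n+1))).card else 0) := by
  rw [← Finset.card_filter_add_card_filter_not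
    (p := fun h => h (Fin.last n) = 0) (s := decSeqs (n+1) a b)]
  congr 1
  · -- last entry 0 : drop it
    apply Finset.card_nbij' (fun h => fun i : Fin n => h i.castSucc)
      (fun g => Fin.snoc g 0)
    · intro h hh
      simp only [Finset.mem_coe, Finset.mem_filter, mem_decSeqs] at hh ⊢
      obtain ⟨⟨⟨hbd, hsum⟩, hdec⟩, hlast⟩ := hh
      refine ⟨⟨fun i => hbd _, ?_⟩, fun i j hij => hdec _ _ (by simpa using hij)⟩
      rw [← hsum, Fin.sum_univ_castSucc, hlast, add_zero]
    · intro g hg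
      simp only [Finset.mem_coe, Finset.mem_filter, mem_decSeqs] at hg ⊢
      obtain ⟨⟨hbd, hsum⟩, hdec⟩ := hg
      refine ⟨⟨⟨?_, ?_⟩, ?_⟩, by simp⟩
      · intro i
        refine Fin.lastCases ?_ ?_ i <;> simp [hbd]
      · rw [Fin.sum_univ_castSucc]; simp [hsum]
      · intro i j
        refine Fin.lastCases ?_ (fun j' => ?_) j
        · intro _
          simp
        · intro hij
          have hi : i < Fin.last n := lt_of_le_of_lt hij (Fin.castSucc_lt_last j')
          obtain ⟨i', rfl⟩ := Fin.exists_castSucc_eq.2 (Fin.ne_last_of_lt hi)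
          simp only [Fin.snoc_castSucc]
          exact hdec i' j' (by rwa [Fin.castSucc_le_castSucc_iff] at hij)
    · intro h hh
      simp only [Finset.mem_coe, Finset.mem_filter] at hh
      ext i
      refine Fin.lastCases ?_ ?_ i
      · simp [hh.2]
      · intro i'; simp
    · intro g hg
      ext i
      simp
  · -- last entry positive : subtract one from each
    split_ifs with hcond
    · obtain ⟨hb, ha⟩ := hcond
      apply Finset.card_nbij' (fun h => fun i => h i - 1) (fun k => fun i => k i + 1)
      · intro h hh
        simp only [Finset.mem_coe, Finset.mem_filter, mem_decSeqs] at hh ⊢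
        obtain ⟨⟨⟨hbd, hsum⟩, hdec⟩, hlast⟩ := hh
        have hpos : ∀ i, 1 ≤ h i := fun i =>
          le_trans (Nat.one_le_iff_ne_zero.2 hlast) (hdec i (Fin.last n) (Fin.le_last i))
        refine ⟨⟨fun i => Nat.sub_le_sub_right (hbd i) 1, ?_⟩,
          fun i j hij => Nat.sub_le_sub_right (hdec i j hij) 1⟩
        have : ∑ i, (h i - 1) + (n+1) = b := by
          calc ∑ i, (h i - 1) + (n+1) = ∑ i, (h i - 1) + ∑ _i : Fin (n+1), 1 := by simp
            _ = ∑ i, ((h i - 1) + 1) := (Finset.sum_add_distrib).symm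
            _ = ∑ i, h i := Finset.sum_congr rfl fun i _ => Nat.sub_add_cancel (hpos i)
            _ = b := hsum
        omega
      · intro k hk
        simp only [Finset.mem_coe, Finset.mem_filter, mem_decSeqs] at hk ⊢
        obtain ⟨⟨hbd, hsum⟩, hdec⟩ := hk
        refine ⟨⟨⟨fun i => by have := hbd i; omega, ?_⟩,
          fun i j hij => by have := hdec i j hij; omega⟩, by omega⟩
        rw [Finset.sum_add_distrib, hsum]
        simp only [Finset.sum_const, Finset.card_univ, Fintype.card_fin, smul_eq_mul, mul_one]
        omega
      · intro h hh
        simp only [Finset.mem_coe, Finset.mem_filter, mem_decSeqs] at hh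
        obtain ⟨⟨⟨hbd, hsum⟩, hdec⟩, hlast⟩ := hh
        have hpos : ∀ i, 1 ≤ h i := fun i =>
          le_trans (Nat.one_le_iff_ne_zero.2 hlast) (hdec i (Fin.last n) (Fin.le_last i))
        ext i
        show h i - 1 + 1 = h i
        have := hpos i
        omega
      · intro k hk
        ext i
        show k i + 1 - 1 = k i
        omega
    · rw [Finset.card_eq_zero]
      ext h
      simp only [Finset.mem_filter, mem_decSeqs, Finset.notMem_empty, iff_false]
      rintro ⟨⟨⟨hbd, hsum⟩, hdec⟩, hlast⟩
      have hpos : ∀ i, 1 ≤ h i := fun i =>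
        le_trans (Nat.one_le_iff_ne_zero.2 hlast) (hdec i (Fin.last n) (Fin.le_last i))
      apply hcond
      constructor
      · calc n+1 = ∑ i : Fin (n+1), 1 := by simp
        _ ≤ ∑ i, h i := Finset.sum_le_sum fun i _ => hpos i
        _ = b := hsum
      · exact le_trans (hpos 0) (hbd 0)



noncomputable def E (a b : ℕ) : Fin 2 →₀ ℕ := Finsupp.single 0 a + Finsupp.single 1 b

@[simp] lemma E_apply0 (a b : ℕ) : E a b 0 = a := by simp [E]
@[simp] lemma E_apply1 (a b : ℕ) : E a b 1 = b := by
  simp [E, Finsupp.single_apply]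

lemma fin2_le {e d : Fin 2 →₀ ℕ} : e ≤ d ↔ e 0 ≤ d 0 ∧ e 1 ≤ d 1 := by
  rw [Finsupp.le_def]
  exact ⟨fun h => ⟨h 0, h 1⟩, by rintro ⟨h0, h1⟩ s; fin_cases s <;> assumption⟩

lemma XX_eq (a b : ℕ) :
    (MvPowerSeries.X 0 : MvPowerSeries (Fin 2) ℤ) ^ a * MvPowerSeries.X 1 ^ b
      = MvPowerSeries.monomial (E a b) 1 := by
  rw [MvPowerSeries.X_pow_eq, MvPowerSeries.X_pow_eq, MvPowerSeries.monomial_mul_monomial,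
    one_mul, E]

lemma coeff_XXmul (a b : ℕ) (G : MvPowerSeries (Fin 2) ℤ) (d : Fin 2 →₀ ℕ) :
    MvPowerSeries.coeff d
        ((MvPowerSeries.X 0 : MvPowerSeries (Fin 2) ℤ) ^ a * MvPowerSeries.X 1 ^ b * G)
      = if a ≤ d 0 ∧ b ≤ d 1 then MvPowerSeries.coeff (d - E a b) G else 0 := by
  rw [XX_eq, MvPowerSeries.coeff_monomial_mul]
  have : E a b ≤ d ↔ a ≤ d 0 ∧ b ≤ d 1 := by rw [fin2_le]; simp
  rw [if_congr this rfl rfl]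
  simp

lemma sub_E0 (d : Fin 2 →₀ ℕ) (a b : ℕ) : (d - E a b) 0 = d 0 - a := by
  rw [Finsupp.tsub_apply]; simp

lemma sub_E1 (d : Fin 2 →₀ ℕ) (a b : ℕ) : (d - E a b) 1 = d 1 - b := by
  rw [Finsupp.tsub_apply]; simp

noncomputable def Fn (n : ℕ) : MvPowerSeries (Fin 2) ℤ :=
  fun d => ((decSeqs n (d 0) (d 1)).card : ℤ)

lemma coeff_Fn (n : ℕ) (d : Fin 2 →₀ ℕ) :
    MvPowerSeries.coeff d (Fn n) = ((decSeqs n (d 0) (d 1)).card : ℤ) := rfl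

lemma coeff_one_sub_XXmul (i n : ℕ) (d : Fin 2 →₀ ℕ) :
    MvPowerSeries.coeff d
        ((1 - (MvPowerSeries.X 0 : MvPowerSeries (Fin 2) ℤ) * MvPowerSeries.X 1 ^ i) * Fn n)
      = ((decSeqs n (d 0) (d 1)).card : ℤ)
        - if 1 ≤ d 0 ∧ i ≤ d 1 then ((decSeqs n (d 0 - 1) (d 1 - i)).card : ℤ) else 0 := by
  rw [sub_mul, one_mul, map_sub, coeff_Fn]
  congr 1
  rw [show (MvPowerSeries.X 0 : MvPowerSeries (Fin 2) ℤ) * MvPowerSeries.X 1 ^ i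
      = (MvPowerSeries.X 0 : MvPowerSeries (Fin 2) ℤ) ^ 1 * MvPowerSeries.X 1 ^ i by rw [pow_one],
    coeff_XXmul]
  split_ifs with h
  · rw [coeff_Fn, sub_E0, sub_E1]
  · rfl

lemma step (n : ℕ) :
    (1 - (MvPowerSeries.X 0 : MvPowerSeries (Fin 2) ℤ) * MvPowerSeries.X 1 ^ (n+1)) * Fn (n+1)
      = Fn n := by
  ext d
  rw [coeff_one_sub_XXmul, coeff_Fn, decSeqs_rec n (d 0) (d 1)]
  push_cast
  rw [if_congr (and_comm (a := n+1 ≤ d 1) (b := 1 ≤ d 0)) rfl rfl]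
  split_ifs with h1 <;> ring

lemma base : (1 - (MvPowerSeries.X 0 : MvPowerSeries (Fin 2) ℤ) * MvPowerSeries.X 1 ^ 0) * Fn 0
    = 1 := by
  ext d
  rw [coeff_one_sub_XXmul, decSeqs_zero, decSeqs_zero, MvPowerSeries.coeff_one]
  have hd : d = 0 ↔ d 0 = 0 ∧ d 1 = 0 := by
    constructor
    · rintro rfl; simp
    · rintro ⟨h0, h1⟩
      ext s
      fin_cases s <;> simpa
  by_cases h1 : d 1 = 0
  · by_cases h0 : d 0 = 0
    · simp [h0, h1, hd]
    · have : (1:ℕ) ≤ d 0 := Nat.one_le_iff_ne_zero.2 h0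
      rw [if_pos h1, if_pos ⟨this, Nat.zero_le _⟩, if_pos (by omega), if_neg (by tauto)]
      ring
  · rw [if_neg h1, if_neg (show ¬d = 0 by rw [hd]; tauto)]
    have h2 : ¬(d 1 - 0 = 0) := by omega
    simp [h2, h1]

lemma prodFn (n : ℕ) :
    (∏ i ∈ Finset.range (n + 1),
        (1 - (MvPowerSeries.X 0 : MvPowerSeries (Fin 2) ℤ) * MvPowerSeries.X 1 ^ i)) * Fn n
      = 1 := by
  induction n with
  | zero => simpa using base
  | succ n ih =>
      rw [Finset.prod_range_succ, mul_assoc, step, ih]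


variable {n : ℕ} (π : Equiv.Perm (Fin n))


variable {n : ℕ} (π : Equiv.Perm (Fin n))

lemma mem_descSet_bounds {j : ℕ} (hj : j ∈ descSet n π) : 1 ≤ j ∧ j < n := by
  have := Finset.mem_filter.1 hj
  have h1 := Finset.mem_Icc.1 this.1
  rcases Nat.eq_zero_or_pos n with rfl | hn
  · omega
  · omega

lemma mem_descSet_succ {k : ℕ} (hk : k + 1 < n) :
    (k + 1) ∈ descSet n π ↔ ((π ⟨k+1, hk⟩ : ℕ) < π ⟨k, by omega⟩) := by
  rw [descSet, Finset.mem_filter, Finset.mem_Icc]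
  have h1 : permVal n π (k+1) = (π ⟨k+1, hk⟩ : ℕ) := dif_pos hk
  have h2 : permVal n π (k+1-1) = (π ⟨k, by omega⟩ : ℕ) := by
    simp only [Nat.add_sub_cancel]
    exact dif_pos (by omega)
  rw [h1, h2]
  constructor
  · exact fun h => h.2
  · exact fun h => ⟨by omega, h⟩

/-- number of descents at positions `> k` -/
def dcnt (k : ℕ) : ℕ := ((descSet n π).filter (fun j => k < j)).card

lemma dcnt_eq_zero {k : ℕ} (hk : n - 1 ≤ k) : dcnt π k = 0 := by
  rw [dcnt, Finset.card_eq_zero, Finset.filter_eq_empty_iff]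
  intro j hj
  have := mem_descSet_bounds π hj
  omega

lemma dcnt_succ (k : ℕ) :
    dcnt π k = dcnt π (k+1) + (if k + 1 ∈ descSet n π then 1 else 0) := by
  rw [dcnt, dcnt]
  have : (descSet n π).filter (fun j => k < j)
      = (descSet n π).filter (fun j => k + 1 < j) ∪ (descSet n π).filter (fun j => j = k + 1) := by
    rw [← Finset.filter_or]
    apply Finset.filter_congr
    intro j _
    constructor
    · intro h; omega
    · intro h; omega
  rw [this, Finset.card_union_of_disjoint]
  · congr 1
    rw [Finset.filter_eq']
    split_ifs <;> simp
  · rw [Finset.disjoint_filter]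
    intro j _ h
    omega

lemma dcnt_zero : dcnt π 0 = des n π := by
  rw [dcnt, des]
  congr 1
  rw [Finset.filter_eq_self]
  intro j hj
  exact (mem_descSet_bounds π hj).1

lemma dcnt_le (k : ℕ) : dcnt π k ≤ des n π := Finset.card_filter_le _ _

lemma dcnt_antitone {k l : ℕ} (h : k ≤ l) : dcnt π l ≤ dcnt π k := by
  apply Finset.card_le_card
  intro j hj
  simp only [Finset.mem_filter] at hj ⊢
  exact ⟨hj.1, by omega⟩

lemma sum_dcnt : ∑ k ∈ Finset.range n, dcnt π k = maj n π := by
  rw [maj]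
  have : ∀ k ∈ Finset.range n, dcnt π k
      = ∑ j ∈ descSet n π, if k < j then 1 else 0 := by
    intro k _
    rw [dcnt, Finset.card_filter]
  rw [Finset.sum_congr rfl this, Finset.sum_comm]
  apply Finset.sum_congr rfl
  intro j hj
  have hb := mem_descSet_bounds π hj
  rw [Finset.sum_ite, Finset.sum_const, Finset.sum_const]
  have : (Finset.range n).filter (fun x => x < j) = Finset.range j := by
    ext x
    simp only [Finset.mem_filter, Finset.mem_range]
    omega
  simp [this]

lemma antitone_of_adj (u : Fin n → ℕ)
    (adj : ∀ k, ∀ hk : k + 1 < n, u ⟨k+1, hk⟩ ≤ u ⟨k, Nat.lt_of_succ_lt hk⟩) :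
    ∀ i j : Fin n, i ≤ j → u j ≤ u i := by
  suffices H : ∀ m, ∀ i j : Fin n, (j:ℕ) = (i:ℕ) + m → u j ≤ u i by
    intro i j hij
    exact H ((j:ℕ) - (i:ℕ)) i j (by have := Fin.le_def.1 hij; omega)
  intro m
  induction m with
  | zero =>
      intro i j h
      have : i = j := Fin.ext (by omega)
      rw [this]
  | succ m ih =>
      intro i j h
      have hk : (i:ℕ) + m + 1 < n := by have := j.isLt; omega
      have hj : j = ⟨(i:ℕ) + m + 1, hk⟩ := Fin.ext (by simp only [Fin.val_mk]; omega)
      refine le_trans ?_ (ih i ⟨(i:ℕ) + m, Nat.lt_of_succ_lt hk⟩ (by simp))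
      rw [hj]
      exact adj ((i:ℕ) + m) hk

lemma tie_of_adj (u : Fin n → ℕ)
    (adj : ∀ k, ∀ hk : k + 1 < n, u ⟨k+1, hk⟩ ≤ u ⟨k, Nat.lt_of_succ_lt hk⟩)
    (tie : ∀ k, ∀ hk : k + 1 < n, u ⟨k+1, hk⟩ = u ⟨k, Nat.lt_of_succ_lt hk⟩ →
      π ⟨k, Nat.lt_of_succ_lt hk⟩ < π ⟨k+1, hk⟩) :
    ∀ i j : Fin n, i < j → u i = u j → π i < π j := by
  have anti := antitone_of_adj u adj
  suffices H : ∀ m, ∀ i j : Fin n, (j:ℕ) = (i:ℕ) + m + 1 → u i = u j → π i < π j by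
    intro i j hij hu
    exact H ((j:ℕ) - (i:ℕ) - 1) i j (by have := Fin.lt_def.1 hij; omega) hu
  intro m
  induction m with
  | zero =>
      intro i j h hu
      have hk : (i:ℕ) + 1 < n := by have := j.isLt; omega
      have hj : j = ⟨(i:ℕ) + 1, hk⟩ := Fin.ext (by simp only [Fin.val_mk]; omega)
      subst hj
      have htt := tie (i:ℕ) hk
      simp only [Fin.eta] at htt
      exact htt hu.symm
  | succ m ih =>
      intro i j h hu
      have hk : (i:ℕ) + m + 1 + 1 < n := by have := j.isLt; omega
      set j' : Fin n := ⟨(i:ℕ) + m + 1, Nat.lt_of_succ_lt hk⟩ with hj'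
      have h1 : u j ≤ u j' := anti j' j (Fin.le_def.2 (by simp only [hj', Fin.val_mk]; omega))
      have h2 : u j' ≤ u i := anti i j' (Fin.le_def.2 (by simp only [hj', Fin.val_mk]; omega))
      have hui : u i = u j' := by omega
      have huj : u j' = u j := by omega
      refine lt_trans (ih i j' rfl hui) ?_
      have hj : j = ⟨(i:ℕ) + m + 1 + 1, hk⟩ := Fin.ext (by simp only [Fin.val_mk]; omega)
      rw [hj]
      exact tie ((i:ℕ) + m + 1) hk (by rw [← hj, ← huj])

/-- adjacent compatibility of `f` with `π` -/
def compat (π : Equiv.Perm (Fin n)) (f : Fin n → ℕ) : Prop :=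
  ∀ k, ∀ hk : k + 1 < n,
    f (π ⟨k+1, hk⟩) ≤ f (π ⟨k, Nat.lt_of_succ_lt hk⟩) ∧
      (f (π ⟨k+1, hk⟩) = f (π ⟨k, Nat.lt_of_succ_lt hk⟩) → (k+1) ∉ descSet n π)

lemma sort_eq_iff_compat {a : ℕ} (f : Fin n → ℕ) (hf : ∀ i, f i ≤ a) :
    π = Tuple.sort (fun i => a - f i) ↔ compat π f := by
  rw [Tuple.eq_sort_iff]
  constructor
  · rintro ⟨hmono, htie⟩ k hk
    have hle : (⟨k, Nat.lt_of_succ_lt hk⟩ : Fin n) ≤ ⟨k+1, hk⟩ := Fin.le_def.2 (by simp only [Fin.val_mk]; omega)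
    have h1 : a - f (π ⟨k, Nat.lt_of_succ_lt hk⟩) ≤ a - f (π ⟨k+1, hk⟩) := hmono hle
    have hfa1 := hf (π ⟨k+1, hk⟩)
    have hfa2 := hf (π ⟨k, Nat.lt_of_succ_lt hk⟩)
    constructor
    · omega
    · intro heq hD
      have hlt : (⟨k, Nat.lt_of_succ_lt hk⟩ : Fin n) < ⟨k+1, hk⟩ := Fin.lt_def.2 (by simp only [Fin.val_mk]; omega)
      have := htie _ _ hlt
        (show a - f (π ⟨k, Nat.lt_of_succ_lt hk⟩) = a - f (π ⟨k+1, hk⟩) by omega)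
      have hD' := (mem_descSet_succ π hk).1 hD
      have := Fin.lt_def.1 this
      omega
  · intro hc
    have adj : ∀ k, ∀ hk : k + 1 < n,
        (fun i => f (π i)) ⟨k+1, hk⟩ ≤ (fun i => f (π i)) ⟨k, Nat.lt_of_succ_lt hk⟩ :=
      fun k hk => (hc k hk).1
    have anti := antitone_of_adj (fun i => f (π i)) adj
    constructor
    · intro i j hij
      show a - f (π i) ≤ a - f (π j)
      exact Nat.sub_le_sub_left (anti i j hij) a
    · intro i j hij heq
      have heq2 : a - f (π i) = a - f (π j) := heq
      have hfi := hf (π i)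
      have hfj := hf (π j)
      have hfeq : f (π i) = f (π j) := by omega
      clear heq heq2
      refine tie_of_adj π (fun i => f (π i)) adj ?_ i j hij hfeq
      intro k hk heq2
      have hnd := (hc k hk).2 heq2
      have h1 : ¬ ((π ⟨k+1, hk⟩ : ℕ) < (π ⟨k, Nat.lt_of_succ_lt hk⟩ : ℕ)) :=
        fun h => hnd ((mem_descSet_succ π hk).2 h)
      have hne : π ⟨k, Nat.lt_of_succ_lt hk⟩ ≠ π ⟨k+1, hk⟩ := by
        intro h
        have := π.injective h
        simp [Fin.ext_iff] at this
      have : (π ⟨k, Nat.lt_of_succ_lt hk⟩ : ℕ) ≠ (π ⟨k+1, hk⟩ : ℕ) :=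
        fun h => hne (Fin.ext h)
      exact Fin.lt_def.2 (by omega)

lemma dcnt_le_of_compat (f : Fin n → ℕ) (hc : compat π f) :
    ∀ k : Fin n, dcnt π (k : ℕ) ≤ f (π k) := by
  suffices H : ∀ t, ∀ k : Fin n, n - 1 - (k : ℕ) ≤ t → dcnt π (k:ℕ) ≤ f (π k) by
    intro k
    exact H (n - 1 - (k:ℕ)) k le_rfl
  intro t
  induction t with
  | zero =>
      intro k hk
      rw [dcnt_eq_zero π (by omega)]
      exact Nat.zero_le _
  | succ t ih =>
      intro k hk
      by_cases h : n - 1 - (k:ℕ) ≤ t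
      · exact ih k h
      · have hk1 : (k:ℕ) + 1 < n := by omega
        have hrec := dcnt_succ π (k:ℕ)
        have hih := ih ⟨(k:ℕ)+1, hk1⟩ (by simp only [Fin.val_mk]; omega)
        simp only at hih
        obtain ⟨hle, htie⟩ := hc (k:ℕ) hk1
        have hketa : (⟨(k:ℕ), Nat.lt_of_succ_lt hk1⟩ : Fin n) = k := Fin.eta k _
        rw [hketa] at hle htie
        by_cases hD : ((k:ℕ)+1) ∈ descSet n π
        · have hstrict : f (π ⟨(k:ℕ)+1, hk1⟩) < f (π k) := by
            rcases lt_or_eq_of_le hle with h' | h'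
            · exact h'
            · exact absurd hD (htie h')
          rw [if_pos hD] at hrec
          omega
        · rw [if_neg hD] at hrec
          omega

lemma maj_le_of_compat {a b : ℕ} (f : Fin n → ℕ) (hc : compat π f)
    (hsum : ∑ i, f i = b) : maj n π ≤ b := by
  have dle := dcnt_le_of_compat π f hc
  calc maj n π = ∑ k ∈ Finset.range n, dcnt π k := (sum_dcnt π).symm
    _ = ∑ k : Fin n, dcnt π (k : ℕ) := (Fin.sum_univ_eq_sum_range (fun k => dcnt π k) n).symm
    _ ≤ ∑ k : Fin n, f (π k) := Finset.sum_le_sum fun k _ => dle k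
    _ = ∑ i, f i := Equiv.sum_comp π f
    _ = b := hsum

lemma des_le_of_compat {a : ℕ} (hn : 0 < n) (f : Fin n → ℕ) (hc : compat π f)
    (hbd : ∀ i, f i ≤ a) : des n π ≤ a := by
  have dle := dcnt_le_of_compat π f hc ⟨0, hn⟩
  rw [dcnt_zero] at dle
  exact le_trans dle (hbd _)

lemma adj_Phi (f : Fin n → ℕ) (hc : compat π f) :
    ∀ k, ∀ hk : k + 1 < n,
      f (π ⟨k+1, hk⟩) - dcnt π (k+1) ≤ f (π ⟨k, Nat.lt_of_succ_lt hk⟩) - dcnt π k := by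
  intro k hk
  have dle := dcnt_le_of_compat π f hc ⟨k+1, hk⟩
  have hrec := dcnt_succ π k
  obtain ⟨hle, htie⟩ := hc k hk
  by_cases hD : (k+1) ∈ descSet n π
  · have hstrict : f (π ⟨k+1, hk⟩) < f (π ⟨k, Nat.lt_of_succ_lt hk⟩) := by
      rcases lt_or_eq_of_le hle with h' | h'
      · exact h'
      · exact absurd hD (htie h')
    rw [if_pos hD] at hrec
    omega
  · rw [if_neg hD] at hrec
    omega

lemma fiber_card (a b : ℕ) :
    ((bddFuns n a b).filter (fun f => Tuple.sort (fun i => a - f i) = π)).card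
      = if des n π ≤ a ∧ maj n π ≤ b
          then (decSeqs n (a - des n π) (b - maj n π)).card else 0 := by
  split_ifs with hcond
  · obtain ⟨hdes, hmaj⟩ := hcond
    apply Finset.card_nbij' (fun f => fun k : Fin n => f (π k) - dcnt π (k : ℕ))
      (fun h => fun i => h (π⁻¹ i) + dcnt π ((π⁻¹ i : Fin n) : ℕ))
    · -- forward membership
      intro f hf
      rw [Finset.mem_coe, Finset.mem_filter, mem_bddFuns] at hf
      obtain ⟨⟨hbd, hsum⟩, hsort⟩ := hf
      have hc : compat π f := (sort_eq_iff_compat π f hbd).1 hsort.symm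
      have dle := dcnt_le_of_compat π f hc
      have anti := antitone_of_adj (fun k : Fin n => f (π k) - dcnt π (k : ℕ))
        (adj_Phi π f hc)
      rw [Finset.mem_coe, mem_decSeqs]
      refine ⟨⟨?_, ?_⟩, anti⟩
      · intro k
        have hn : 0 < n := k.pos
        have h0 : f (π k) - dcnt π (k : ℕ) ≤ f (π ⟨0, hn⟩) - dcnt π 0 :=
          anti ⟨0, hn⟩ k (Fin.le_def.2 (by simp))
        rw [dcnt_zero] at h0
        exact le_trans h0 (Nat.sub_le_sub_right (hbd _) _)
      · have hsum2 : ∑ k : Fin n, f (π k) = b := by rw [Equiv.sum_comp π f]; exact hsum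
        have hdsum : ∑ k : Fin n, dcnt π (k : ℕ) = maj n π := by
          rw [Fin.sum_univ_eq_sum_range (fun k => dcnt π k) n]; exact sum_dcnt π
        have : ∑ k : Fin n, (f (π k) - dcnt π (k : ℕ)) + ∑ k : Fin n, dcnt π (k : ℕ)
            = ∑ k : Fin n, f (π k) := by
          rw [← Finset.sum_add_distrib]
          exact Finset.sum_congr rfl fun k _ => Nat.sub_add_cancel (dle k)
        beta_reduce
        omega
    · -- backward membership
      intro h hh
      rw [Finset.mem_coe, mem_decSeqs] at hh
      obtain ⟨⟨hbd, hsum⟩, hdec⟩ := hh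
      have hbd2 : ∀ i, h (π⁻¹ i) + dcnt π ((π⁻¹ i : Fin n) : ℕ) ≤ a := by
        intro i
        have h1 := hbd (π⁻¹ i)
        have h2 := dcnt_le π ((π⁻¹ i : Fin n) : ℕ)
        omega
      have hcompat : compat π (fun i => h (π⁻¹ i) + dcnt π ((π⁻¹ i : Fin n) : ℕ)) := by
        intro k hk
        simp only [Equiv.Perm.inv_def, Equiv.symm_apply_apply]
        have hdecadj : h ⟨k+1, hk⟩ ≤ h ⟨k, Nat.lt_of_succ_lt hk⟩ :=
          hdec _ _ (Fin.le_def.2 (by simp only [Fin.val_mk]; omega))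
        have hrec := dcnt_succ π k
        constructor
        · have := dcnt_antitone π (Nat.le_succ k)
          omega
        · intro heq hD
          rw [if_pos hD] at hrec
          omega
      rw [Finset.mem_coe, Finset.mem_filter, mem_bddFuns]
      refine ⟨⟨hbd2, ?_⟩, ((sort_eq_iff_compat π _ hbd2).2 hcompat).symm⟩
      have h1 : ∑ i, (h (π⁻¹ i) + dcnt π ((π⁻¹ i : Fin n) : ℕ))
          = ∑ k : Fin n, (h k + dcnt π (k : ℕ)) :=
        Equiv.sum_comp π⁻¹ (fun k : Fin n => h k + dcnt π (k : ℕ))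
      have hdsum : ∑ k : Fin n, dcnt π (k : ℕ) = maj n π := by
        rw [Fin.sum_univ_eq_sum_range (fun k => dcnt π k) n]; exact sum_dcnt π
      rw [h1, Finset.sum_add_distrib, hsum, hdsum]
      omega
    · -- left inverse
      intro f hf
      rw [Finset.mem_coe, Finset.mem_filter, mem_bddFuns] at hf
      obtain ⟨⟨hbd, hsum⟩, hsort⟩ := hf
      have hc : compat π f := (sort_eq_iff_compat π f hbd).1 hsort.symm
      have dle := dcnt_le_of_compat π f hc
      funext i
      show f (π (π⁻¹ i)) - dcnt π ((π⁻¹ i : Fin n) : ℕ) + dcnt π ((π⁻¹ i : Fin n) : ℕ) = f i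
      have := dle (π⁻¹ i)
      simp only [Equiv.Perm.inv_def, Equiv.apply_symm_apply] at this ⊢
      omega
    · -- right inverse
      intro h hh
      funext k
      show h (π⁻¹ (π k)) + dcnt π ((π⁻¹ (π k) : Fin n) : ℕ) - dcnt π (k : ℕ) = h k
      rw [Equiv.Perm.inv_def, Equiv.symm_apply_apply]
      omega
  · -- fiber is empty
    rw [Finset.card_eq_zero, Finset.filter_eq_empty_iff]
    intro f hf
    rw [mem_bddFuns] at hf
    obtain ⟨hbd, hsum⟩ := hf
    intro hsort
    have hc : compat π f := (sort_eq_iff_compat π f hbd).1 hsort.symm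
    apply hcond
    have hmaj := maj_le_of_compat π (a := a) f hc hsum
    rcases Nat.eq_zero_or_pos n with rfl | hn
    · refine ⟨?_, hmaj⟩
      rw [des]
      have : descSet 0 π = ∅ := by
        rw [Finset.eq_empty_iff_forall_notMem]
        intro j hj
        have := mem_descSet_bounds π hj
        omega
      rw [this]
      simp
    · exact ⟨des_le_of_compat π hn f hc hbd, hmaj⟩

lemma key (a b : ℕ) :
    (bddFuns n a b).card
      = ∑ π : Equiv.Perm (Fin n),
          if des n π ≤ a ∧ maj n π ≤ b
            then (decSeqs n (a - des n π) (b - maj n π)).card else 0 := by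
  rw [Finset.card_eq_sum_card_fiberwise
    (f := fun f => Tuple.sort (fun i => a - f i)) (t := Finset.univ)
    (fun f _ => Finset.mem_univ _)]
  exact Finset.sum_congr rfl fun π _ => fiber_card π a b

/-- P1 : coefficient of carlitzSum -/
lemma carlitzSum_coeff (n : ℕ) (d : Fin 2 →₀ ℕ) :
    carlitzSum n d = ((bddFuns n (d 0) (d 1)).card : ℤ) := by
  show ((∑ t ∈ Finset.range (d 0 + 1), (Polynomial.X : Polynomial ℤ) ^ t) ^ n).coeff (d 1) = _
  rw [Finset.sum_pow']
  rw [Polynomial.finset_sum_coeff]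
  have : ∀ p ∈ Fintype.piFinset fun _ : Fin n => Finset.range (d 0 + 1),
      (∏ i, (Polynomial.X : Polynomial ℤ) ^ p i).coeff (d 1)
        = if ∑ i, p i = d 1 then 1 else 0 := by
    intro p _
    rw [Finset.prod_pow_eq_pow_sum Finset.univ p (Polynomial.X : Polynomial ℤ),
      Polynomial.coeff_X_pow]
    simp [eq_comm]
  rw [Finset.sum_congr rfl this, Finset.sum_boole]
  simp [bddFuns]


lemma csum (n : ℕ) :
    carlitzSum n
      = (∑ π : Equiv.Perm (Fin n),
          (MvPowerSeries.X 0 : MvPowerSeries (Fin 2) ℤ) ^ des n π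
            * MvPowerSeries.X 1 ^ maj n π) * Fn n := by
  ext d
  rw [Finset.sum_mul, map_sum, MvPowerSeries.coeff_apply, carlitzSum_coeff]
  have : ∀ π : Equiv.Perm (Fin n),
      MvPowerSeries.coeff d
          ((MvPowerSeries.X 0 : MvPowerSeries (Fin 2) ℤ) ^ des n π
            * MvPowerSeries.X 1 ^ maj n π * Fn n)
        = if des n π ≤ d 0 ∧ maj n π ≤ d 1
            then ((decSeqs n (d 0 - des n π) (d 1 - maj n π)).card : ℤ) else 0 := by
    intro π
    rw [coeff_XXmul]
    split_ifs with h
    · rw [coeff_Fn, sub_E0, sub_E1]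
    · rfl
  rw [Finset.sum_congr rfl fun π _ => this π, key (d 0) (d 1)]
  push_cast
  rfl

end Carlitz

/-- Carlitz: `C_n(x,q) = ∏_{i=0}^n (1 - x q^i) · ∑_{j=1}^∞ [j]_q^n x^{j-1}` in `ℤ[[x,q]]`. -/
theorem stmt_5 (n : ℕ) :
    ∑ π : Equiv.Perm (Fin n),
        (MvPowerSeries.X 0 : MvPowerSeries (Fin 2) ℤ) ^ des n π * MvPowerSeries.X 1 ^ maj n π =
      (∏ i ∈ Finset.range (n + 1),
          (1 - (MvPowerSeries.X 0 : MvPowerSeries (Fin 2) ℤ) * MvPowerSeries.X 1 ^ i)) *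
        carlitzSum n := by
  rw [Carlitz.csum n]
  rw [show (∏ i ∈ Finset.range (n + 1),
        (1 - (MvPowerSeries.X 0 : MvPowerSeries (Fin 2) ℤ) * MvPowerSeries.X 1 ^ i)) *
      ((∑ π : Equiv.Perm (Fin n),
          (MvPowerSeries.X 0 : MvPowerSeries (Fin 2) ℤ) ^ des n π
            * MvPowerSeries.X 1 ^ maj n π) * Carlitz.Fn n)
    = (∑ π : Equiv.Perm (Fin n),
          (MvPowerSeries.X 0 : MvPowerSeries (Fin 2) ℤ) ^ des n π
            * MvPowerSeries.X 1 ^ maj n π)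
        * ((∏ i ∈ Finset.range (n + 1),
            (1 - (MvPowerSeries.X 0 : MvPowerSeries (Fin 2) ℤ) * MvPowerSeries.X 1 ^ i))
          * Carlitz.Fn n) from by ring]
  rw [Carlitz.prodFn n, mul_one]
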